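/- Let E be a regular expression over an alphabet Σ and let w₁, θ, w₂ be words over Σ. Then the set {i ∈ ℕ : w₁ ++ θ^i ++ w₂ ∈ L(E)} is ultimately periodic, where L(E) is the language matched by E. -/

import Mathlib

open List Set Computability RegularExpression

namespace UPAux

variable {α : Type*}

@[simp] lemma matches'_plus' (P Q : RegularExpression α) :
    (P.plus Q).matches' = P.matches' + Q.matches' := matches'_add P Q

@[simp] lemma matches'_comp' (P Q : RegularExpression α) :
    (P.comp Q).matches' = P.matches' * Q.matches' := matches'_mul P Q

/-- Antimirov partial derivative of a regular expression by a letter. -/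
def pd (a : α) : RegularExpression α → Set (RegularExpression α)
  | zero => ∅
  | epsilon => ∅
  | char b => {F | a = b ∧ F = epsilon}
  | plus E F => pd a E ∪ pd a F
  | comp E F => (fun G => comp G F) '' pd a E ∪ {G | [] ∈ E.matches' ∧ G ∈ pd a F}
  | .star E => (fun G => comp G (E.star)) '' pd a E

/-- Support: a finite set containing all iterated partial derivatives. -/
def supp : RegularExpression α → Set (RegularExpression α)
  | zero => ∅
  | epsilon => ∅
  | char _ => {epsilon}
  | plus E F => supp E ∪ supp F
  | comp E F => (fun G => comp G F) '' supp E ∪ supp F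
  | .star E => (fun G => comp G (E.star)) '' supp E

lemma supp_finite (E : RegularExpression α) : (supp E).Finite := by
  induction E with
  | zero => simp only [supp]; exact Set.finite_empty
  | epsilon => simp only [supp]; exact Set.finite_empty
  | char b => simp only [supp]; exact Set.finite_singleton _
  | plus E F ihE ihF => simp only [supp]; exact ihE.union ihF
  | comp E F ihE ihF => simp only [supp]; exact (ihE.image _).union ihF
  | star E ihE => simp only [supp]; exact ihE.image _

lemma pd_subset_supp (a : α) (E : RegularExpression α) : pd a E ⊆ supp E := by
  induction E with
  | zero => simp [pd, supp]
  | epsilon => simp [pd, supp]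
  | char b =>
      intro F hF
      simp only [pd, Set.mem_setOf_eq] at hF
      simp [supp, hF.2]
  | plus E F ihE ihF =>
      simp only [pd, supp]; exact Set.union_subset_union ihE ihF
  | comp E F ihE ihF =>
      simp only [pd, supp]
      refine Set.union_subset ?_ ?_
      · exact (Set.image_mono ihE).trans Set.subset_union_left
      · intro G hG; exact Set.mem_union_right _ (ihF hG.2)
  | star E ihE => simp only [pd, supp]; exact Set.image_mono ihE

lemma supp_closed (a : α) (E : RegularExpression α) :
    ∀ F ∈ supp E, pd a F ⊆ supp E := by
  induction E with
  | zero => intro F hF; simp [supp] at hF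
  | epsilon => intro F hF; simp [supp] at hF
  | char b =>
      intro F hF
      simp only [supp, Set.mem_singleton_iff] at hF
      subst hF
      simp [pd]
  | plus E F ihE ihF =>
      simp only [supp]
      rintro G (hG | hG)
      · exact (ihE G hG).trans Set.subset_union_left
      · exact (ihF G hG).trans Set.subset_union_right
  | comp E F ihE ihF =>
      simp only [supp]
      rintro G (⟨H, hH, rfl⟩ | hG)
      · intro K hK
        simp only [pd, Set.mem_union, Set.mem_image, Set.mem_setOf_eq] at hK
        rcases hK with ⟨K', hK', rfl⟩ | ⟨hnil, hK⟩
        · exact Set.mem_union_left _ ⟨K', ihE H hH hK', rfl⟩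
        · exact Set.mem_union_right _ (pd_subset_supp a F hK)
      · intro K hK
        exact Set.mem_union_right _ (ihF G hG hK)
  | star E ihE =>
      rintro G hG
      simp only [supp, Set.mem_image] at hG
      obtain ⟨H, hH, rfl⟩ := hG
      intro K hK
      simp only [pd, Set.mem_union, Set.mem_image, Set.mem_setOf_eq] at hK
      simp only [supp, Set.mem_image]
      rcases hK with ⟨K', hK', rfl⟩ | ⟨hnil, hK⟩
      · exact ⟨K', ihE H hH hK', rfl⟩
      · obtain ⟨K', hK', rfl⟩ := hK
        exact ⟨K', pd_subset_supp a E hK', rfl⟩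

lemma cons_mem_kstar_iff {l : Language α} {a : α} {w : List α} :
    a :: w ∈ l∗ ↔ ∃ u v, a :: u ∈ l ∧ v ∈ l∗ ∧ u ++ v = w := by
  constructor
  · intro h
    rw [Language.mem_kstar_iff_exists_nonempty] at h
    obtain ⟨S, hS, hmem⟩ := h
    cases S with
    | nil => simp at hS
    | cons y S' =>
        have hy := hmem y (by simp)
        cases y with
        | nil => exact absurd rfl hy.2
        | cons b u =>
            rw [List.flatten_cons, List.cons_append] at hS
            injection hS with h1 h2
            subst h1
            exact ⟨u, S'.flatten, hy.1,
              Language.join_mem_kstar (fun z hz => (hmem z (List.mem_cons_of_mem _ hz)).1),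
              h2.symm⟩
  · rintro ⟨u, v, hu, hv, rfl⟩
    have h2 : (a :: u) ++ v ∈ l * l∗ := Language.append_mem_mul hu hv
    have h3 : l * l∗ ≤ l∗ := by
      conv_rhs => rw [← Language.one_add_self_mul_kstar_eq_kstar]
      exact le_sup_right
    exact h3 h2

lemma mem_pd (a : α) (w : List α) (E : RegularExpression α) :
    a :: w ∈ E.matches' ↔ ∃ F ∈ pd a E, w ∈ F.matches' := by
  induction E generalizing w with
  | zero =>
      simp only [pd, matches'_zero]
      exact iff_of_false (Language.notMem_zero _) (by rintro ⟨F, hF, -⟩; exact hF)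
  | epsilon =>
      simp only [pd, matches'_epsilon]
      exact iff_of_false (by simp [Language.mem_one]) (by rintro ⟨F, hF, -⟩; exact hF)
  | char b =>
      simp only [pd, matches'_char]
      constructor
      · intro h
        replace h : a :: w = [b] := h
        injection h with h1 h2
        subst h1; subst h2
        refine ⟨epsilon, ⟨rfl, rfl⟩, ?_⟩
        rw [one_def, matches'_epsilon]
        exact Language.nil_mem_one
      · rintro ⟨F, ⟨rfl, rfl⟩, hw⟩
        rw [one_def, matches'_epsilon, Language.mem_one] at hw
        subst hw
        rfl
  | plus E F ihE ihF =>
      rw [matches'_plus', Language.mem_add]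
      constructor
      · rintro (h | h)
        · obtain ⟨G, hG, hw⟩ := (ihE w).1 h
          exact ⟨G, Or.inl hG, hw⟩
        · obtain ⟨G, hG, hw⟩ := (ihF w).1 h
          exact ⟨G, Or.inr hG, hw⟩
      · rintro ⟨G, hG, hw⟩
        rcases (show G ∈ pd a E ∪ pd a F from hG) with hG' | hG'
        exacts [Or.inl ((ihE w).2 ⟨G, hG', hw⟩), Or.inr ((ihF w).2 ⟨G, hG', hw⟩)]
  | comp E F ihE ihF =>
      rw [matches'_comp']
      constructor
      · intro h
        obtain ⟨u, hu, v, hv, huv⟩ := Language.mem_mul.1 h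
        cases u with
        | nil =>
            rw [List.nil_append] at huv; subst huv
            obtain ⟨G, hG, hw⟩ := (ihF w).1 hv
            exact ⟨G, Or.inr ⟨hu, hG⟩, hw⟩
        | cons b u' =>
            rw [List.cons_append] at huv
            injection huv with h1 h2
            subst h1
            obtain ⟨G, hG, hu'⟩ := (ihE u').1 hu
            refine ⟨G.comp F, Or.inl ⟨G, hG, rfl⟩, ?_⟩
            rw [matches'_comp']
            exact h2 ▸ Language.append_mem_mul hu' hv
      · rintro ⟨H, hH, hw⟩
        simp only [pd, Set.mem_union, Set.mem_image, Set.mem_setOf_eq] at hH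
        rcases hH with ⟨G, hG, rfl⟩ | ⟨hnil, hH'⟩
        · have hw' : w ∈ (G.comp F).matches' := hw
          rw [matches'_comp'] at hw'
          obtain ⟨u, hu, v, hv, rfl⟩ := Language.mem_mul.1 hw'
          have h1 : a :: u ∈ E.matches' := (ihE u).2 ⟨G, hG, hu⟩
          have h2 := Language.append_mem_mul h1 hv
          rwa [List.cons_append] at h2
        · have h1 : a :: w ∈ F.matches' := (ihF w).2 ⟨H, hH', hw⟩
          have h2 := Language.append_mem_mul hnil h1
          rwa [List.nil_append] at h2
  | star E ihE =>
      rw [matches'_star, cons_mem_kstar_iff]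
      constructor
      · rintro ⟨u, v, hu, hv, rfl⟩
        obtain ⟨G, hG, hu'⟩ := (ihE u).1 hu
        refine ⟨G.comp E.star, ?_, ?_⟩
        · simp only [pd, Set.mem_image]; exact ⟨G, hG, rfl⟩
        · rw [matches'_comp', matches'_star]
          exact Language.append_mem_mul hu' hv
      · rintro ⟨H, hH, hw⟩
        simp only [pd, Set.mem_image] at hH
        obtain ⟨G, hG, rfl⟩ := hH
        have hw' : w ∈ (G.comp E.star).matches' := hw
        rw [matches'_comp', matches'_star] at hw'
        obtain ⟨u, hu, v, hv, rfl⟩ := Language.mem_mul.1 hw'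
        exact ⟨u, v, (ihE u).2 ⟨G, hG, hu⟩, hv, rfl⟩

/-- Iterated partial derivative along a word. -/
def pdW : List α → RegularExpression α → Set (RegularExpression α)
  | [], F => {F}
  | a :: w, F => ⋃ G ∈ pd a F, pdW w G

lemma mem_pdW (w v : List α) (F : RegularExpression α) :
    w ++ v ∈ F.matches' ↔ ∃ G ∈ pdW w F, v ∈ G.matches' := by
  induction w generalizing F with
  | nil => simp [pdW]
  | cons a w ih =>
      rw [List.cons_append, mem_pd]
      constructor
      · rintro ⟨G, hG, hwv⟩
        obtain ⟨H, hH, hv⟩ := (ih G).1 hwv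
        refine ⟨H, ?_, hv⟩
        simp only [pdW, Set.mem_iUnion, exists_prop]
        exact ⟨G, hG, hH⟩
      · rintro ⟨H, hH, hv⟩
        simp only [pdW, Set.mem_iUnion, exists_prop] at hH
        obtain ⟨G, hG, hH⟩ := hH
        exact ⟨G, hG, (ih G).2 ⟨H, hH, hv⟩⟩

lemma pdW_subset (E : RegularExpression α) (w : List α) :
    ∀ F ∈ insert E (supp E), pdW w F ⊆ insert E (supp E) := by
  induction w with
  | nil =>
      intro F hF G hG
      simp only [pdW, Set.mem_singleton_iff] at hG
      subst hG; exact hF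
  | cons a w ih =>
      intro F hF G hG
      simp only [pdW, Set.mem_iUnion, exists_prop] at hG
      obtain ⟨H, hH, hG⟩ := hG
      have hHs : H ∈ supp E := by
        rcases hF with rfl | hF
        · exact pd_subset_supp a F hH
        · exact supp_closed a E F hF hH
      exact ih H (Set.mem_insert_iff.2 (Or.inr hHs)) hG

end UPAux

/-- `wpow u k` is the `k`-fold concatenation of the word `u` with itself. -/
def wpow {α : Type*} (u : List α) : ℕ → List α
  | 0 => []
  | k + 1 => u ++ wpow u k

/-- A set `S ⊆ ℕ` is ultimately periodic if there are `μ` and `λ ≥ 1` such that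
for every `n ≥ μ`, `n ∈ S ↔ n + λ ∈ S`. -/
def UltimatelyPeriodic (S : Set ℕ) : Prop :=
  ∃ μ lam : ℕ, 1 ≤ lam ∧ ∀ n : ℕ, μ ≤ n → (n ∈ S ↔ n + lam ∈ S)

lemma wpow_succ' {α : Type*} (u : List α) (k : ℕ) :
    wpow u (k + 1) = wpow u k ++ u := by
  induction k with
  | zero => simp [wpow]
  | succ k ih =>
      have h : u ++ wpow u k = wpow u k ++ u := by rw [← ih]; rfl
      calc wpow u (k + 1 + 1) = u ++ wpow u (k + 1) := rfl
        _ = u ++ (wpow u k ++ u) := by rw [ih]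
        _ = (u ++ wpow u k) ++ u := by rw [List.append_assoc]
        _ = (wpow u k ++ u) ++ u := by rw [h]
        _ = wpow u (k + 1) ++ u := by rw [ih]

theorem stmt10 {α : Type*} (E : RegularExpression α) (w₁ θ w₂ : List α) :
    UltimatelyPeriodic {i : ℕ | w₁ ++ wpow θ i ++ w₂ ∈ E.matches'} := by
  classical
  set Q : Set (RegularExpression α) := insert E (UPAux.supp E) with hQdef
  have hQ : Q.Finite := (UPAux.supp_finite E).insert E
  haveI : Finite ↥Q := hQ.to_subtype
  set f : Set ↥Q → Set ↥Q :=
    fun S => {g | ∃ F : ↥Q, F ∈ S ∧ (g : RegularExpression α) ∈ UPAux.pdW θ (F : RegularExpression α)} with hfdef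
  set s0 : Set ↥Q := {g | (g : RegularExpression α) ∈ UPAux.pdW w₁ E} with hs0def
  have key : ∀ (i : ℕ) (v : List α),
      (w₁ ++ wpow θ i ++ v ∈ E.matches') ↔
        ∃ g : ↥Q, g ∈ f^[i] s0 ∧ v ∈ (g : RegularExpression α).matches' := by
    intro i
    induction i with
    | zero =>
        intro v
        rw [show wpow θ 0 = [] from rfl, List.append_nil, Function.iterate_zero_apply]
        rw [UPAux.mem_pdW w₁ v E]
        constructor
        · rintro ⟨G, hG, hv⟩
          have hGQ : G ∈ Q := UPAux.pdW_subset E w₁ E (Set.mem_insert _ _) hG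
          exact ⟨⟨G, hGQ⟩, hG, hv⟩
        · rintro ⟨g, hg, hv⟩
          exact ⟨(g : RegularExpression α), hg, hv⟩
    | succ i ih =>
        intro v
        have harr : w₁ ++ wpow θ (i + 1) ++ v = w₁ ++ wpow θ i ++ (θ ++ v) := by
          rw [wpow_succ']
          simp [List.append_assoc]
        rw [harr, ih (θ ++ v)]
        constructor
        · rintro ⟨g, hg, hv⟩
          obtain ⟨H, hH, hv'⟩ := (UPAux.mem_pdW θ v (g : RegularExpression α)).1 hv
          have hHQ : H ∈ Q := UPAux.pdW_subset E θ (g : RegularExpression α) g.2 hH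
          refine ⟨⟨H, hHQ⟩, ?_, hv'⟩
          rw [Function.iterate_succ_apply']
          exact ⟨g, hg, hH⟩
        · rintro ⟨h, hh, hv⟩
          rw [Function.iterate_succ_apply'] at hh
          obtain ⟨g, hg, hmem⟩ := hh
          exact ⟨g, hg, (UPAux.mem_pdW θ v (g : RegularExpression α)).2 ⟨(h : RegularExpression α), hmem, hv⟩⟩
  obtain ⟨m, n, hmn, heq⟩ : ∃ m n : ℕ, m < n ∧ f^[m] s0 = f^[n] s0 := by
    obtain ⟨m, n, hne, heq⟩ := Finite.exists_ne_map_eq_of_infinite (fun i : ℕ => f^[i] s0)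
    rcases hne.lt_or_gt with h | h
    · exact ⟨m, n, h, heq⟩
    · exact ⟨n, m, h, heq.symm⟩
  refine ⟨m, n - m, by omega, fun k hk => ?_⟩
  have hiter : f^[k] s0 = f^[k + (n - m)] s0 := by
    have h1 : f^[k] s0 = f^[k - m] (f^[m] s0) := by
      rw [← Function.iterate_add_apply]; congr 1; omega
    have h2 : f^[k + (n - m)] s0 = f^[k - m] (f^[n] s0) := by
      rw [← Function.iterate_add_apply]; congr 1; omega
    rw [h1, h2, heq]
  simp only [Set.mem_setOf_eq]
  rw [key k w₂, key (k + (n - m)) w₂, hiter]
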